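/- Let n ≥ 2, ρ ∈ (0,n) non-integer, and k a nonnegative integer with k < n(⌈ρ⌉ - ρ)/⌈ρ⌉. Then there exists λ ∈ ℝ with λ > (n - ⌈ρ⌉)/n and (n-k)λ + k < n - ρ; for such λ, the point λ·𝟙 is not in the integer hull of P_{n,ρ}, yet for every pair of disjoint index sets I,J ⊆ [n] with |I|+|J| ≤ k, the vector obtained from λ·𝟙 by setting coordinates in I to 1 and coordinates in J to 0 lies in P_{n,ρ}. -/

import Mathlib

/-- For non-integer `ρ ∈ (0,n)` and `k < n(⌈ρ⌉-ρ)/⌈ρ⌉`, there is `λ` with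
`λ > (n-⌈ρ⌉)/n` and `(n-k)λ + k < n-ρ`; then `λ·𝟙` is outside the integer hull of `P_{n,ρ}`
but all of its `k`-switchings lie in `P_{n,ρ}`. -/
theorem chipped_hypercube_rank_lb (n : ℕ) (hn : 2 ≤ n) (ρ : ℝ)
    (hρ0 : 0 < ρ) (hρn : ρ < n) (hρint : ¬ ∃ m : ℤ, (m : ℝ) = ρ)
    (k : ℕ) (hk : (k : ℝ) < n * ((⌈ρ⌉ : ℝ) - ρ) / (⌈ρ⌉ : ℝ)) :
    ∃ lam : ℝ,
      lam > ((n : ℝ) - (⌈ρ⌉ : ℝ)) / n ∧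
      ((n : ℝ) - k) * lam + k < n - ρ ∧
      (fun _ : Fin n => lam) ∉
        {x : Fin n → ℝ | (∀ i, 0 ≤ x i ∧ x i ≤ 1) ∧ ∑ i, x i ≤ (n : ℝ) - (⌈ρ⌉ : ℝ)} ∧
      ∀ I J : Finset (Fin n), Disjoint I J → I.card + J.card ≤ k →
        (fun i : Fin n => if i ∈ I then (1 : ℝ) else if i ∈ J then 0 else lam) ∈
          {x : Fin n → ℝ | (∀ i, 0 ≤ x i ∧ x i ≤ 1) ∧ ∑ i, x i ≤ (n : ℝ) - ρ} := by
  set C : ℝ := (⌈ρ⌉ : ℝ) with hCdef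
  have hn0 : (0:ℝ) < n := by positivity
  have hC1 : (1:ℝ) ≤ C := by
    rw [hCdef]
    exact_mod_cast Int.ceil_pos.mpr hρ0
  have hC0 : (0:ℝ) < C := by linarith
  have hρC : ρ < C := by
    rcases lt_or_eq_of_le (Int.le_ceil ρ) with h | h
    · exact h
    · exact absurd ⟨⌈ρ⌉, h.symm⟩ hρint
  have hCn : C ≤ n := by
    rw [hCdef]
    exact_mod_cast Int.ceil_le.mpr (show ρ ≤ ((n:ℤ):ℝ) by exact_mod_cast hρn.le)
  have hk' : (k:ℝ) * C < n * (C - ρ) := by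
    have := (lt_div_iff₀ hC0).mp hk
    linarith
  have hkn : (k:ℝ) < n := by nlinarith
  have hnk : (0:ℝ) < n - k := by linarith
  set c : ℝ := ((n:ℝ) - C) / n with hcdef
  set t : ℝ := ((n:ℝ) - ρ - k) / ((n:ℝ) - k) with htdef
  have hct : c < t := by
    rw [hcdef, htdef, div_lt_div_iff₀ hn0 hnk]
    nlinarith
  refine ⟨(c + t) / 2, by linarith, ?_, ?_, ?_⟩
  · -- (n-k)*lam + k < n - ρ
    have hlt : (c + t) / 2 < t := by linarith
    have : ((n:ℝ) - k) * ((c + t) / 2) < ((n:ℝ) - k) * t :=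
      (mul_lt_mul_iff_right₀ hnk).mpr hlt
    have ht : ((n:ℝ) - k) * t = (n:ℝ) - ρ - k := by
      rw [htdef]; field_simp
    linarith
  · -- not in integer hull
    intro hmem
    have hsum := hmem.2
    rw [Finset.sum_const, Finset.card_univ, Fintype.card_fin, nsmul_eq_mul] at hsum
    have hc : (n:ℝ) * c = (n:ℝ) - C := by rw [hcdef]; field_simp
    nlinarith
  · intro I J hIJ hcard
    have hlamc : c < (c + t) / 2 := by linarith
    have hlamt : (c + t) / 2 < t := by linarith
    have hc0 : 0 ≤ c := by
      rw [hcdef]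
      apply div_nonneg <;> linarith
    have ht1 : t ≤ 1 := by
      rw [htdef, div_le_one hnk]; linarith
    have hlam0 : 0 ≤ (c + t) / 2 := by linarith
    have hlam1 : (c + t) / 2 ≤ 1 := by linarith
    constructor
    · intro i
      by_cases hI : i ∈ I <;> by_cases hJ : i ∈ J <;>
        simp [hI, hJ] <;> constructor <;> linarith
    · have hpt : ∀ i : Fin n,
          (if i ∈ I then (1:ℝ) else if i ∈ J then 0 else (c + t) / 2)
          = (if i ∈ I then (1 - (c + t) / 2) else 0)
            + ((if i ∈ J then (-((c + t) / 2)) else 0) + (c + t) / 2) := by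
        intro i
        by_cases hI : i ∈ I <;> by_cases hJ : i ∈ J
        · exact absurd (hIJ.forall_ne_finset hI hJ rfl) (fun h => h)
        · simp [hI, hJ]
        · simp [hI, hJ]
        · simp [hI, hJ]
      have hsum : ∑ i, (if i ∈ I then (1:ℝ) else if i ∈ J then 0 else (c + t) / 2)
          = (I.card : ℝ) * (1 - (c + t) / 2)
            + ((J.card : ℝ) * (-((c + t) / 2)) + (n:ℝ) * ((c + t) / 2)) := by
        rw [Finset.sum_congr rfl (fun i _ => hpt i), Finset.sum_add_distrib,
          Finset.sum_add_distrib]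
        congr 1
        · simp [Finset.sum_ite_mem, Finset.univ_inter, Finset.sum_const,
            mul_comm]
          ring
        · congr 1
          · simp [Finset.sum_ite_mem, Finset.univ_inter, Finset.sum_const,
              mul_comm]
          · rw [Finset.sum_const, Finset.card_univ, Fintype.card_fin, nsmul_eq_mul]
      show ∑ i, _ ≤ (n:ℝ) - ρ
      rw [hsum]
      have hcard' : (I.card : ℝ) + (J.card : ℝ) ≤ (k:ℝ) := by exact_mod_cast hcard
      have hG2 : ((n:ℝ) - k) * ((c + t) / 2) + k < (n:ℝ) - ρ := by
        have ht : ((n:ℝ) - k) * t = (n:ℝ) - ρ - k := by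
          rw [htdef]; field_simp
        nlinarith
      have hb0 : (0:ℝ) ≤ (J.card : ℝ) := by positivity
      have ha0 : (0:ℝ) ≤ (I.card : ℝ) := by positivity
      have h1 : (0:ℝ) ≤ ((k:ℝ) - I.card - J.card) * (1 - (c + t) / 2) :=
        mul_nonneg (by linarith) (by linarith)
      linarith [h1]
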